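/- arXiv:2408.10049 — 2 statements merged into one kernel-verified Lean document; each statement's English description precedes it below -/
import Mathlib

section
/- The monoidal subcategory overline{Nec}₋ of the extended necklace category is generated, as a monoidal category, by the codegeneracy maps σ_i: Δ^{n+1} → Δ^n (0 ≤ i ≤ n), the coinert maps ν^{co}_{p,q}: Δ^{p+q} → Δ^p ∨ Δ^q (p,q > 0), and the composites ν^{co}_{p,q} ∘ δ_p: Δ^{p+q-1} → Δ^p ∨ Δ^q (p,q > 0). -/
def IsNeck (p : ℕ) (T : Finset ℕ) : Prop :=
  T ⊆ Finset.range (p + 1) ∧ 0 ∈ T ∧ p ∈ T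

/-- Wedge of necklaces. -/
def wedgeT (T : Finset ℕ) (p : ℕ) (U : Finset ℕ) : Finset ℕ :=
  T ∪ U.image (· + p)

/-- The class of morphisms of `overline{Nec}₋` generated, as a monoidal
category (i.e. under composition and wedge sum, together with all identities),
by the codegeneracies `σ_i : Δ^{n+1} → Δ^n`, the coinert maps
`ν^{co}_{a,b} : Δ^{a+b} → Δ^a ∨ Δ^b` and the composites
`ν^{co}_{a,b} ∘ δ_a : Δ^{a+b-1} → Δ^a ∨ Δ^b`.  A morphism of `overline{Nec}₋`
from `(T,p)` to `(U,q)` is recorded by its underlying map `f` (its component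
being the target `U`). -/
inductive GenMinus : ∀ (_p _q : ℕ) (_T _U : Finset ℕ), (ℕ → ℕ) → Prop
  | id (p : ℕ) (T : Finset ℕ) : GenMinus p p T T (fun x => x)
  | sigma (n i : ℕ) (h : i ≤ n) :
      GenMinus (n + 1) n {0, n + 1} {0, n} (fun x => if x ≤ i then x else x - 1)
  | nuco (a b : ℕ) (ha : 0 < a) (hb : 0 < b) :
      GenMinus (a + b) (a + b) {0, a + b} {0, a, a + b} (fun x => x)
  | nucoDelta (a b : ℕ) (ha : 0 < a) (hb : 0 < b) :
      GenMinus (a + b - 1) (a + b) {0, a + b - 1} {0, a, a + b}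
        (fun x => if x < a then x else x + 1)
  | comp {p q r : ℕ} {T U V : Finset ℕ} {f g : ℕ → ℕ} :
      GenMinus p q T U f → GenMinus q r U V g → GenMinus p r T V (fun x => g (f x))
  | wedge {p q p' q' : ℕ} {T U T' U' : Finset ℕ} {f f' : ℕ → ℕ} :
      GenMinus p q T U f → GenMinus p' q' T' U' f' →
      GenMinus (p + p') (q + q') (wedgeT T p T') (wedgeT U q U')
        (fun x => if x ≤ p then f x else q + f' (x - p))

lemma surj_le {a b : ℕ} {g : ℕ → ℕ} (h : ∀ y ≤ b, ∃ x ≤ a, g x = y) : b ≤ a := by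
  have hsub : Finset.range (b+1) ⊆ (Finset.range (a+1)).image g := by
    intro y hy
    simp only [Finset.mem_range, Nat.lt_succ_iff, Finset.mem_image] at *
    obtain ⟨x, hx, hgx⟩ := h y hy
    exact ⟨x, hx, hgx⟩
  have h1 := Finset.card_le_card hsub
  have h2 := Finset.card_image_le (s := Finset.range (a+1)) (f := g)
  simp only [Finset.card_range] at h1 h2
  omega

lemma step_ge {a : ℕ} {g : ℕ → ℕ} (hst : ∀ i < a, g i < g (i+1)) :
    ∀ d x, x + d ≤ a → g x + d ≤ g (x + d) := by
  intro d
  induction d with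
  | zero => simp
  | succ d IH =>
    intro x hx
    have h1 := IH x (by omega)
    have h2 := hst (x + d) (by omega)
    have : x + (d+1) = (x+d) + 1 := by omega
    rw [this]
    omega

lemma genA : ∀ a b : ℕ, ∀ g : ℕ → ℕ, MonotoneOn g (Set.Iic a) → g 0 = 0 → g a = b →
    (∀ y ≤ b, ∃ x ≤ a, g x = y) →
    ∃ g', (∀ i ≤ a, g' i = g i) ∧ GenMinus a b ({0,a} : Finset ℕ) ({0,b} : Finset ℕ) g' := by
  intro a
  induction a using Nat.strong_induction_on with
  | _ a IH =>
    intro b g hmono hg0 hga hsurj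
    have hba : b ≤ a := surj_le hsurj
    by_cases hcol : ∃ i < a, g i = g (i+1)
    · obtain ⟨i, hia, hgi⟩ := hcol
      obtain ⟨n, rfl⟩ : ∃ n, a = n + 1 := ⟨a - 1, by omega⟩
      set g1 : ℕ → ℕ := fun x => if x ≤ i then g x else g (x+1) with hg1
      have hag : ∀ x ≤ n + 1, g1 (if x ≤ i then x else x - 1) = g x := by
        intro x hx
        by_cases h1 : x ≤ i
        · simp [hg1, h1]
        · rcases Nat.eq_or_lt_of_le (show i + 1 ≤ x by omega) with h2 | h2
          · simp [hg1, ← h2, hgi]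
          · have : ¬ (x - 1 ≤ i) := by omega
            simp only [hg1, if_neg h1, if_neg this]
            congr 1; omega
      have hmono1 : MonotoneOn g1 (Set.Iic n) := by
        intro x hx y hy hxy
        simp only [Set.mem_Iic] at hx hy
        by_cases h1 : x ≤ i <;> by_cases h2 : y ≤ i <;>
          simp only [hg1, if_pos, if_neg, h1, h2, if_true, if_false] <;>
          first
          | exact hmono (by simp; omega) (by simp; omega) (by omega)
          | omega
      have hsurj1 : ∀ y ≤ b, ∃ x ≤ n, g1 x = y := by
        intro y hy
        obtain ⟨x, hx, hgx⟩ := hsurj y hy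
        by_cases h1 : x ≤ i
        · exact ⟨x, by omega, by simp [hg1, h1, hgx]⟩
        · refine ⟨x - 1, by omega, ?_⟩
          by_cases h2 : x - 1 ≤ i
          · have : x = i + 1 := by omega
            simp [hg1, h2, this, ← hgi, ← hgx, this]
          · simp only [hg1, if_neg h2]
            rw [show x - 1 + 1 = x by omega]; exact hgx
      have hg10 : g1 0 = 0 := by simp [hg1, hg0]
      have hg1n : g1 n = b := by
        by_cases h1 : n ≤ i
        · have : i = n := by omega
          simp [hg1, h1, ← hga, this, hgi]
          exact this ▸ hgi
        · simp [hg1, h1, hga]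
      obtain ⟨g2, hg2agree, hg2gen⟩ := IH n (by omega) b g1 hmono1 hg10 hg1n hsurj1
      have hσ := GenMinus.sigma n i (by omega)
      have hcomp := GenMinus.comp hσ hg2gen
      refine ⟨_, ?_, hcomp⟩
      intro x hx
      have hval : (if x ≤ i then x else x - 1) ≤ n := by split <;> omega
      rw [hg2agree _ hval, hag x hx]
    · push_neg at hcol
      have hst : ∀ i < a, g i < g (i+1) := by
        intro i hia
        have h1 := hmono (show i ∈ Set.Iic a by simp; omega) (show i+1 ∈ Set.Iic a by simp; omega) (by omega)
        have h2 := hcol i hia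
        omega
      have heq : ∀ x ≤ a, g x = x := by
        intro x hx
        have h1 := step_ge hst x 0 (by omega)
        have h2 := step_ge hst (a - x) x (by omega)
        rw [show x + (a - x) = a by omega] at h2
        simp [hg0] at h1
        omega
      have hab : a = b := by rw [← hga, heq a le_rfl]
      subst hab
      exact ⟨_, fun i hi => (heq i hi).symm, GenMinus.id a {0, a}⟩

lemma wedge_shift (V : Finset ℕ) (w : ℕ) :
    ((V.filter (fun u => w ≤ u)).image (fun u => u - w)).image (· + w)
      = V.filter (fun u => w ≤ u) := by
  ext x
  simp only [Finset.mem_image, Finset.mem_filter]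
  constructor
  · rintro ⟨y, ⟨z, ⟨hz, hwz⟩, rfl⟩, rfl⟩
    rw [show z - w + w = z by omega]
    exact ⟨hz, hwz⟩
  · rintro ⟨hx, hwx⟩
    exact ⟨x - w, ⟨x, ⟨hx, hwx⟩, rfl⟩, by omega⟩

lemma genInsert (b v : ℕ) (V' : Finset ℕ) (hb0 : 0 ∈ V') (hbV : b ∈ V')
    (h0v : 0 < v) (hvb : v < b) (hmin : ∀ u ∈ V', u = 0 ∨ v < u) :
    ∃ n : ℕ → ℕ, (∀ i, n i = i) ∧ GenMinus b b V' (insert v V') n := by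
  set S := V'.filter (fun u => v < u) with hS
  have hSne : S.Nonempty := ⟨b, by simp [hS, hbV, hvb]⟩
  set w := S.min' hSne with hw
  have hwS : w ∈ S := Finset.min'_mem _ _
  have hwV : w ∈ V' := (Finset.mem_filter.mp hwS).1
  have hvw : v < w := (Finset.mem_filter.mp hwS).2
  have hwmin : ∀ u ∈ V', v < u → w ≤ u := fun u hu hvu =>
    Finset.min'_le _ _ (by simp [hS, hu, hvu])
  have hwb : w ≤ b := hwmin b hbV hvb
  set V₂ := (V'.filter (fun u => w ≤ u)).image (fun u => u - w) with hV₂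
  have A := GenMinus.nuco v (w - v) h0v (by omega)
  rw [show v + (w - v) = w by omega] at A
  have C := GenMinus.wedge A (GenMinus.id (b - w) V₂)
  rw [show w + (b - w) = b by omega] at C
  have E1 : wedgeT ({0, w} : Finset ℕ) w V₂ = V' := by
    unfold wedgeT
    rw [hV₂, wedge_shift]
    ext x
    simp only [Finset.mem_union, Finset.mem_insert, Finset.mem_singleton, Finset.mem_filter]
    constructor
    · rintro ((rfl | rfl) | ⟨hx, _⟩) <;> assumption
    · intro hx
      rcases hmin x hx with rfl | hvx
      · tauto
      · exact Or.inr ⟨hx, hwmin x hx hvx⟩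
  have E2 : wedgeT ({0, v, w} : Finset ℕ) w V₂ = insert v V' := by
    unfold wedgeT
    rw [hV₂, wedge_shift]
    ext x
    simp only [Finset.mem_union, Finset.mem_insert, Finset.mem_singleton, Finset.mem_filter]
    constructor
    · rintro ((rfl | rfl | rfl) | ⟨hx, _⟩) <;> tauto
    · rintro (rfl | hx)
      · tauto
      · rcases hmin x hx with rfl | hvx
        · tauto
        · exact Or.inr ⟨hx, hwmin x hx hvx⟩
  rw [E1, E2] at C
  refine ⟨_, fun i => ?_, C⟩
  show (if i ≤ w then i else w + (i - w)) = i
  split <;> omega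

lemma genSkip (b v : ℕ) (V : Finset ℕ) (hb0 : 0 ∈ V) (hbV : b ∈ V)
    (h0v : 0 < v) (hvb : v < b) (hvV : v ∈ V) (hmin : ∀ u ∈ V, u = 0 ∨ v ≤ u) :
    ∃ n : ℕ → ℕ, (∀ i, n i = if i < v then i else i + 1) ∧
      GenMinus (b - 1) b ((V.erase v).image (fun u => if u < v then u else u - 1)) V n := by
  set S := V.filter (fun u => v < u) with hS
  have hSne : S.Nonempty := ⟨b, by simp [hS, hbV, hvb]⟩
  set w := S.min' hSne with hw
  have hwS : w ∈ S := Finset.min'_mem _ _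
  have hwV : w ∈ V := (Finset.mem_filter.mp hwS).1
  have hvw : v < w := (Finset.mem_filter.mp hwS).2
  have hwmin : ∀ u ∈ V, v < u → w ≤ u := fun u hu hvu =>
    Finset.min'_le _ _ (by simp [hS, hu, hvu])
  have hwb : w ≤ b := hwmin b hbV hvb
  set V₂ := (V.filter (fun u => w ≤ u)).image (fun u => u - w) with hV₂
  have A := GenMinus.nucoDelta v (w - v) h0v (by omega)
  rw [show v + (w - v) = w by omega] at A
  have C := GenMinus.wedge A (GenMinus.id (b - w) V₂)
  rw [show w - 1 + (b - w) = b - 1 by omega, show w + (b - w) = b by omega] at C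
  have E1 : wedgeT ({0, w - 1} : Finset ℕ) (w - 1) V₂
      = (V.erase v).image (fun u => if u < v then u else u - 1) := by
    unfold wedgeT
    ext x
    simp only [Finset.mem_union, Finset.mem_insert, Finset.mem_singleton, Finset.mem_image,
      hV₂, Finset.mem_filter, Finset.mem_erase]
    constructor
    · rintro ((rfl | rfl) | ⟨y, ⟨z, ⟨hz, hwz⟩, rfl⟩, rfl⟩)
      · exact ⟨0, ⟨by omega, hb0⟩, by simp [h0v]⟩
      · exact ⟨w, ⟨by omega, hwV⟩, by rw [if_neg (by omega)]⟩
      · exact ⟨z, ⟨by omega, hz⟩, by rw [if_neg (by omega)]; omega⟩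
    · rintro ⟨u, ⟨huv, hu⟩, rfl⟩
      rcases hmin u hu with rfl | hvu
      · left; left; rw [if_pos h0v]
      · have hwu : w ≤ u := hwmin u hu (by omega)
        right
        exact ⟨u - w, ⟨u, ⟨hu, hwu⟩, rfl⟩, by rw [if_neg (by omega)]; omega⟩
  have E2 : wedgeT ({0, v, w} : Finset ℕ) w V₂ = V := by
    unfold wedgeT
    rw [hV₂, wedge_shift]
    ext x
    simp only [Finset.mem_union, Finset.mem_insert, Finset.mem_singleton, Finset.mem_filter]
    constructor
    · rintro ((rfl | rfl | rfl) | ⟨hx, _⟩) <;> assumption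
    · intro hx
      rcases hmin x hx with rfl | hvx
      · tauto
      · rcases Nat.eq_or_lt_of_le hvx with rfl | hvx'
        · tauto
        · exact Or.inr ⟨hx, hwmin x hx hvx'⟩
  rw [E1, E2] at C
  refine ⟨_, fun i => ?_, C⟩
  show (if i ≤ w - 1 then if i < v then i else i + 1 else w + (i - (w - 1))) = _
  by_cases h1 : i ≤ w - 1
  · rw [if_pos h1]
  · rw [if_neg h1, if_neg (by omega)]
    omega

lemma genB : ∀ N a b : ℕ, ∀ V : Finset ℕ, b + V.card ≤ N → IsNeck b V →
    ∀ g : ℕ → ℕ, MonotoneOn g (Set.Iic a) → g 0 = 0 → g a = b →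
    (∀ y ≤ b, y ∈ V ∨ ∃ x ≤ a, g x = y) →
    ∃ g', (∀ i ≤ a, g' i = g i) ∧ GenMinus a b ({0, a} : Finset ℕ) V g' := by
  intro N
  induction N with
  | zero =>
    intro a b V hN hneck
    have := Finset.card_pos.mpr ⟨0, hneck.2.1⟩
    omega
  | succ N IH =>
    intro a b V hN hneck g hmono hg0 hga hcov
    have hV0 : 0 ∈ V := hneck.2.1
    have hVb : b ∈ V := hneck.2.2
    have hVsub : V ⊆ Finset.range (b+1) := hneck.1
    by_cases hint : ∃ v ∈ V, 0 < v ∧ v < b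
    · set S := V.filter (fun u => 0 < u ∧ u < b) with hS
      have hSne : S.Nonempty := by
        obtain ⟨v, hv1, hv2, hv3⟩ := hint
        exact ⟨v, by simp [hS, hv1, hv2, hv3]⟩
      set v := S.min' hSne with hv
      have hvS : v ∈ S := Finset.min'_mem _ _
      have hvV : v ∈ V := (Finset.mem_filter.mp hvS).1
      have h0v : 0 < v := (Finset.mem_filter.mp hvS).2.1
      have hvb : v < b := (Finset.mem_filter.mp hvS).2.2
      have hvmin : ∀ u ∈ V, 0 < u → u < b → v ≤ u := fun u hu h1 h2 =>
        Finset.min'_le _ _ (by simp [hS, hu, h1, h2])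
      by_cases him : ∃ x ≤ a, g x = v
      · -- remove v from the target, recurse, and insert it back via nuco
        have hcard : (V.erase v).card < V.card := Finset.card_erase_lt_of_mem hvV
        have hcov' : ∀ y ≤ b, y ∈ V.erase v ∨ ∃ x ≤ a, g x = y := by
          intro y hy
          rcases hcov y hy with hyV | hex
          · by_cases hyv : y = v
            · subst hyv; exact Or.inr him
            · exact Or.inl (Finset.mem_erase.mpr ⟨hyv, hyV⟩)
          · exact Or.inr hex
        have hmin' : ∀ u ∈ V.erase v, u = 0 ∨ v < u := by
          intro u hu
          obtain ⟨huv, huV⟩ := Finset.mem_erase.mp hu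
          have := hVsub huV
          simp only [Finset.mem_range] at this
          rcases Nat.eq_zero_or_pos u with rfl | hu0
          · left; rfl
          · right
            rcases Nat.lt_or_ge u b with h1 | h1
            · have := hvmin u huV hu0 h1; omega
            · omega
        obtain ⟨g₁, hg₁, hgen₁⟩ := IH a b (V.erase v) (by omega)
          ⟨fun x hx => hVsub (Finset.mem_of_mem_erase hx),
            Finset.mem_erase.mpr ⟨by omega, hV0⟩, Finset.mem_erase.mpr ⟨by omega, hVb⟩⟩
          g hmono hg0 hga hcov'
        obtain ⟨n, hn, hgenn⟩ := genInsert b v (V.erase v)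
          (Finset.mem_erase.mpr ⟨by omega, hV0⟩) (Finset.mem_erase.mpr ⟨by omega, hVb⟩)
          h0v hvb hmin'
        have hcomp := GenMinus.comp hgen₁ hgenn
        rw [Finset.insert_erase hvV] at hcomp
        exact ⟨_, fun i hi => by rw [hn, hg₁ i hi], hcomp⟩
      · -- v is skipped by g : use nucoDelta
        push_neg at him
        set V'' := (V.erase v).image (fun u => if u < v then u else u - 1) with hV''
        set g₂ : ℕ → ℕ := fun x => if g x < v then g x else g x - 1 with hg₂
        have hgne : ∀ x ≤ a, g x ≠ v := fun x hx => him x hx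
        have hcard : V''.card < V.card := by
          calc V''.card ≤ (V.erase v).card := Finset.card_image_le
          _ < V.card := Finset.card_erase_lt_of_mem hvV
        have hb1 : 1 ≤ b := by omega
        have hneck'' : IsNeck (b - 1) V'' := by
          refine ⟨?_, ?_, ?_⟩
          · intro x hx
            obtain ⟨u, hu, rfl⟩ := Finset.mem_image.mp hx
            obtain ⟨huv, huV⟩ := Finset.mem_erase.mp hu
            have := hVsub huV
            simp only [Finset.mem_range] at this ⊢
            split <;> omega
          · exact Finset.mem_image.mpr ⟨0, Finset.mem_erase.mpr ⟨by omega, hV0⟩, by simp [h0v]⟩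
          · refine Finset.mem_image.mpr ⟨b, Finset.mem_erase.mpr ⟨by omega, hVb⟩, ?_⟩
            rw [if_neg (by omega)]
        have hmono₂ : MonotoneOn g₂ (Set.Iic a) := by
          intro x hx y hy hxy
          simp only [Set.mem_Iic] at hx hy
          have h1 := hmono (by simpa using hx) (by simpa using hy) hxy
          have h2 := hgne x hx
          have h3 := hgne y hy
          simp only [hg₂]
          split <;> split <;> omega
        have hcov₂ : ∀ y ≤ b - 1, y ∈ V'' ∨ ∃ x ≤ a, g₂ x = y := by
          intro y hy
          by_cases hyv : y < v
          · rcases hcov y (by omega) with hyV | ⟨x, hx, hgx⟩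
            · exact Or.inl (Finset.mem_image.mpr ⟨y, Finset.mem_erase.mpr ⟨by omega, hyV⟩,
                by rw [if_pos hyv]⟩)
            · refine Or.inr ⟨x, hx, ?_⟩
              simp only [hg₂, hgx, if_pos hyv]
          · rcases hcov (y+1) (by omega) with hyV | ⟨x, hx, hgx⟩
            · refine Or.inl (Finset.mem_image.mpr ⟨y+1, Finset.mem_erase.mpr ⟨by omega, hyV⟩, ?_⟩)
              rw [if_neg (by omega)]
              omega
            · refine Or.inr ⟨x, hx, ?_⟩
              have := hgne x hx
              simp only [hg₂, hgx]
              rw [if_neg (by omega)]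
              omega
        have hmin' : ∀ u ∈ V, u = 0 ∨ v ≤ u := by
          intro u hu
          rcases Nat.eq_zero_or_pos u with rfl | hu0
          · left; rfl
          · right
            have := hVsub hu
            simp only [Finset.mem_range] at this
            rcases Nat.lt_or_ge u b with h1 | h1
            · exact hvmin u hu hu0 h1
            · omega
        obtain ⟨g₂', hg₂', hgen₂⟩ := IH a (b-1) V'' (by omega) hneck'' g₂ hmono₂
          (by simp [hg₂, hg0, h0v]) (by simp only [hg₂, hga]; rw [if_neg (by omega)]) hcov₂
        obtain ⟨n, hn, hgenn⟩ := genSkip b v V hV0 hVb h0v hvb hvV hmin'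
        rw [← hV''] at hgenn
        have hcomp := GenMinus.comp hgen₂ hgenn
        refine ⟨_, fun i hi => ?_, hcomp⟩
        rw [hg₂' i hi]
        show n _ = _
        rw [hn]
        have h2 := hgne i hi
        simp only [hg₂]
        by_cases h3 : g i < v
        · simp [h3]
        · rw [if_neg h3, if_neg (by omega)]
          omega
    · -- V = {0, b} : g is surjective, use genA
      push_neg at hint
      have hVeq : V = ({0, b} : Finset ℕ) := by
        ext x
        simp only [Finset.mem_insert, Finset.mem_singleton]
        constructor
        · intro hx
          have := hVsub hx
          simp only [Finset.mem_range] at this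
          rcases Nat.eq_zero_or_pos x with rfl | h1
          · tauto
          · have := hint x hx h1
            omega
        · rintro (rfl | rfl) <;> assumption
      have hsurj : ∀ y ≤ b, ∃ x ≤ a, g x = y := by
        intro y hy
        rcases hcov y hy with hyV | hex
        · rw [hVeq] at hyV
          simp only [Finset.mem_insert, Finset.mem_singleton] at hyV
          rcases hyV with rfl | rfl
          · exact ⟨0, by omega, hg0⟩
          · exact ⟨a, le_rfl, hga⟩
        · exact hex
      rw [hVeq]
      exact genA a b g hmono hg0 hga hsurj

lemma genMain : ∀ N p q : ℕ, ∀ T U : Finset ℕ, T.card ≤ N → IsNeck p T → IsNeck q U →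
    ∀ f : ℕ → ℕ, MonotoneOn f (Set.Iic p) → f 0 = 0 → f p = q → (∀ t ∈ T, f t ∈ U) →
    (∀ y ≤ q, y ∈ U ∨ ∃ x ≤ p, f x = y) →
    ∃ g, (∀ i ≤ p, g i = f i) ∧ GenMinus p q T U g := by
  intro N
  induction N with
  | zero =>
    intro p q T U hN hT
    have := Finset.card_pos.mpr ⟨0, hT.2.1⟩
    omega
  | succ N IH =>
    intro p q T U hN hT hU f hmono hf0 hfp hTf hcover
    have hT0 : 0 ∈ T := hT.2.1
    have hTp : p ∈ T := hT.2.2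
    have hTsub : T ⊆ Finset.range (p+1) := hT.1
    by_cases hint : ∃ t ∈ T, 0 < t ∧ t < p
    · -- split off the first bead at the smallest interior point t of T
      set S := T.filter (fun u => 0 < u ∧ u < p) with hS
      have hSne : S.Nonempty := by
        obtain ⟨t, h1, h2, h3⟩ := hint
        exact ⟨t, by simp [hS, h1, h2, h3]⟩
      set t := S.min' hSne with ht
      have htS : t ∈ S := Finset.min'_mem _ _
      have htT : t ∈ T := (Finset.mem_filter.mp htS).1
      have h0t : 0 < t := (Finset.mem_filter.mp htS).2.1
      have htp : t < p := (Finset.mem_filter.mp htS).2.2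
      have htmin : ∀ s ∈ T, 0 < s → s < p → t ≤ s := fun s hs h1 h2 =>
        Finset.min'_le _ _ (by simp [hS, hs, h1, h2])
      set u := f t with hu
      have huU : u ∈ U := hTf t htT
      have huq : u ≤ q := by
        rw [hu, ← hfp]
        exact hmono (by simp; omega) (by simp) (by omega)
      set U1 := U.filter (fun y => y ≤ u) with hU1
      set U2 := (U.filter (fun y => u ≤ y)).image (fun y => y - u) with hU2
      set T2 := (T.filter (fun s => t ≤ s)).image (fun s => s - t) with hT2
      set f2 : ℕ → ℕ := fun x => f (x + t) - u with hf2
      -- first bead via genB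
      have hneckU1 : IsNeck u U1 := by
        refine ⟨?_, ?_, ?_⟩
        · intro x hx
          simp only [hU1, Finset.mem_filter, Finset.mem_range] at hx ⊢
          omega
        · simp only [hU1, Finset.mem_filter]
          exact ⟨hU.2.1, by omega⟩
        · simp only [hU1, Finset.mem_filter]
          exact ⟨huU, le_rfl⟩
      have hcov1 : ∀ y ≤ u, y ∈ U1 ∨ ∃ x ≤ t, f x = y := by
        intro y hy
        rcases hcover y (by omega) with h1 | ⟨x, hx, hgx⟩
        · exact Or.inl (by simp [hU1, h1, hy])
        · rcases le_or_gt x t with h2 | h2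
          · exact Or.inr ⟨x, h2, hgx⟩
          · have : f t ≤ f x := hmono (by simp; omega) (by simp; omega) (by omega)
            have : f x = f t := by omega
            exact Or.inr ⟨t, le_rfl, by rw [← hgx, this]⟩
      obtain ⟨g₁, hg₁, hgen₁⟩ := genB (u + U1.card) t u U1 le_rfl hneckU1 f
        (fun x hx y hy hxy => hmono (by simp at hx ⊢; omega) (by simp at hy ⊢; omega) hxy)
        hf0 rfl hcov1
      -- second part via IH
      have hT2card : T2.card ≤ N := by
        have h1 : T2.card ≤ (T.filter (fun s => t ≤ s)).card := Finset.card_image_le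
        have h2 := Finset.card_filter_add_card_filter_not
          (s := T) (p := fun s => t ≤ s)
        have h3 : 0 < (T.filter (fun a => ¬ t ≤ a)).card :=
          Finset.card_pos.mpr ⟨0, by simp only [Finset.mem_filter]; exact ⟨hT0, by omega⟩⟩
        omega
      have hneckT2 : IsNeck (p - t) T2 := by
        refine ⟨?_, ?_, ?_⟩
        · intro x hx
          simp only [hT2, Finset.mem_image, Finset.mem_filter, Finset.mem_range] at hx ⊢
          obtain ⟨s, ⟨hsT, hts⟩, rfl⟩ := hx
          have := hTsub hsT
          simp only [Finset.mem_range] at this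
          omega
        · exact Finset.mem_image.mpr ⟨t, by simp [Finset.mem_filter, htT], by omega⟩
        · exact Finset.mem_image.mpr ⟨p, Finset.mem_filter.mpr ⟨hTp, le_of_lt htp⟩, rfl⟩
      have hneckU2 : IsNeck (q - u) U2 := by
        refine ⟨?_, ?_, ?_⟩
        · intro x hx
          simp only [hU2, Finset.mem_image, Finset.mem_filter, Finset.mem_range] at hx ⊢
          obtain ⟨s, ⟨hsU, hus⟩, rfl⟩ := hx
          have := hU.1 hsU
          simp only [Finset.mem_range] at this
          omega
        · exact Finset.mem_image.mpr ⟨u, by simp [Finset.mem_filter, huU], by omega⟩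
        · exact Finset.mem_image.mpr ⟨q, by simp [Finset.mem_filter, hU.2.2, huq], rfl⟩
      have hmono2 : MonotoneOn f2 (Set.Iic (p - t)) := by
        intro x hx y hy hxy
        simp only [Set.mem_Iic] at hx hy
        have := hmono (show x + t ∈ Set.Iic p by simp; omega)
          (show y + t ∈ Set.Iic p by simp; omega) (by omega)
        simp only [hf2]
        omega
      have hT2f : ∀ s ∈ T2, f2 s ∈ U2 := by
        intro s hs
        simp only [hT2, Finset.mem_image, Finset.mem_filter] at hs
        obtain ⟨s', ⟨hsT, hts⟩, rfl⟩ := hs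
        have hs'p : s' ≤ p := by
          have := hTsub hsT; simp only [Finset.mem_range] at this; omega
        have hfs : f s' ∈ U := hTf s' hsT
        have hus : u ≤ f s' := hmono (by simp; omega) (by simp; omega) hts
        simp only [hf2, hU2, Finset.mem_image, Finset.mem_filter]
        rw [show s' - t + t = s' by omega]
        exact ⟨f s', ⟨hfs, hus⟩, rfl⟩
      have hcov2 : ∀ y ≤ q - u, y ∈ U2 ∨ ∃ x ≤ p - t, f2 x = y := by
        intro y hy
        rcases hcover (y + u) (by omega) with h1 | ⟨x, hx, hgx⟩
        · exact Or.inl (Finset.mem_image.mpr ⟨y + u, by simp [Finset.mem_filter, h1], by omega⟩)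
        · rcases le_or_gt t x with h2 | h2
          · refine Or.inr ⟨x - t, by omega, ?_⟩
            simp only [hf2]
            rw [show x - t + t = x by omega, hgx]
            omega
          · have : f x ≤ u := hmono (by simp; omega) (by simp; omega) (by omega)
            have hy0 : y = 0 := by omega
            refine Or.inr ⟨0, by omega, ?_⟩
            simp only [hf2, hy0]
            simp [← hu]
      obtain ⟨g₂, hg₂, hgen₂⟩ := IH (p - t) (q - u) T2 U2 hT2card hneckT2 hneckU2 f2 hmono2
        (by simp [hf2, ← hu]) (by simp only [hf2]; rw [show p - t + t = p by omega, hfp]) hT2f hcov2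
      have hwedge := GenMinus.wedge hgen₁ hgen₂
      rw [show t + (p - t) = p by omega, show u + (q - u) = q by omega] at hwedge
      have ET : wedgeT ({0, t} : Finset ℕ) t T2 = T := by
        unfold wedgeT
        ext x
        simp only [Finset.mem_union, Finset.mem_insert, Finset.mem_singleton, Finset.mem_image,
          hT2, Finset.mem_filter]
        constructor
        · rintro ((rfl | rfl) | ⟨y, ⟨s, ⟨hsT, hts⟩, rfl⟩, rfl⟩)
          · exact hT0
          · exact htT
          · rw [show s - t + t = s by omega]; exact hsT
        · intro hx
          rcases Nat.eq_zero_or_pos x with rfl | h1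
          · tauto
          · have hxle : x ≤ p := by
              have := hTsub hx; simp only [Finset.mem_range] at this; omega
            have htx : t ≤ x := by
              rcases Nat.lt_or_ge x p with h2 | h2
              · exact htmin x hx h1 h2
              · omega
            exact Or.inr ⟨x - t, ⟨x, ⟨hx, htx⟩, rfl⟩, by omega⟩
      have EU : wedgeT U1 u U2 = U := by
        unfold wedgeT
        ext x
        simp only [Finset.mem_union, Finset.mem_image, hU1, hU2, Finset.mem_filter]
        constructor
        · rintro (⟨hx, _⟩ | ⟨y, ⟨s, ⟨hsU, hus⟩, rfl⟩, rfl⟩)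
          · exact hx
          · rw [show s - u + u = s by omega]; exact hsU
        · intro hx
          rcases le_or_gt x u with h1 | h1
          · exact Or.inl ⟨hx, h1⟩
          · exact Or.inr ⟨x - u, ⟨x, ⟨hx, by omega⟩, rfl⟩, by omega⟩
      rw [ET, EU] at hwedge
      refine ⟨_, fun i hi => ?_, hwedge⟩
      show (if i ≤ t then g₁ i else u + g₂ (i - t)) = f i
      by_cases h1 : i ≤ t
      · rw [if_pos h1, hg₁ i h1]
      · rw [if_neg h1, hg₂ (i - t) (by omega)]
        simp only [hf2]
        rw [show i - t + t = i by omega]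
        have : u ≤ f i := hmono (by simp; omega) (by simp; omega) (by omega)
        omega
    · -- T = {0, p}
      push_neg at hint
      have hTeq : T = ({0, p} : Finset ℕ) := by
        ext x
        simp only [Finset.mem_insert, Finset.mem_singleton]
        constructor
        · intro hx
          have := hTsub hx
          simp only [Finset.mem_range] at this
          rcases Nat.eq_zero_or_pos x with rfl | h1
          · tauto
          · have := hint x hx h1
            omega
        · rintro (rfl | rfl) <;> assumption
      rw [hTeq]
      exact genB (q + U.card) p q U le_rfl hU f hmono hf0 hfp hcover

/-- The monoidal subcategory `overline{Nec}₋` of the extended necklace category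
is generated as a monoidal category by the maps `σ_i : Δ^{n+1} → Δ^n`
(`0 ≤ i ≤ n`), `ν^{co}_{a,b} : Δ^{a+b} → Δ^a ∨ Δ^b` and
`ν^{co}_{a,b} ∘ δ_a : Δ^{a+b-1} → Δ^a ∨ Δ^b` (`a, b > 0`): every morphism
`(f,U) : (T,p) → (U,q)` of `overline{Nec}₋` (so `f(T) ⊆ U` and
`U ∪ f([p]) = [q]`) lies in the generated class. -/
theorem extNecklace_minus_generated
    (p q : ℕ) (T U : Finset ℕ) (hT : IsNeck p T) (hU : IsNeck q U)
    (f : ℕ → ℕ) (hmono : MonotoneOn f (Set.Iic p)) (hf0 : f 0 = 0) (hfp : f p = q)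
    (hTf : ∀ t ∈ T, f t ∈ U) (hcover : ∀ y ≤ q, y ∈ U ∨ ∃ x ≤ p, f x = y) :
    ∃ g : ℕ → ℕ, (∀ i ≤ p, g i = f i) ∧ GenMinus p q T U g := by
  exact genMain T.card p q T U le_rfl hT hU f hmono hf0 hfp hTf hcover
end

section
/- For every necklace T and every permutation τ of the complement T^c, the coefficients λ^T_τ = (−1)^{dim(T)} sgn(τ) give the unique solution to the system: (i) λ^T_τ = λ^{T'}_{στσ^{-1}} for every spine collapsing map σ: T → T'; (ii) λ^{T₁∨T₂}_{τ₁*τ₂} = λ^{T₁}_{τ₁} λ^{T₂}_{τ₂} and λ^{Δ⁰}_{id} = 1; (iii) λ^T_{τ∘(i_l,i_{l+1})} = −λ^T_τ for adjacent transpositions of T^c; (iv) λ^T_{(ρ|j)} = (−1)^{n+j−1} λ^{δ_{i_j}^{-1}(T)}_ρ where n = dim(T) and (ρ|j) is the permutation inserting i_j in last position; (v) λ^T_{(j|θ)} = (−1)^j λ^{T∪{i_j}}_θ where (j|θ) inserts i_j in first position. -/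
/-- The dimension of a necklace `(T,p)`. -/
abbrev cdim (p : ℕ) (T : Finset ℕ) : ℕ := (Finset.range (p + 1) \ T).card

/-- The enumeration `i_1 < i_2 < …` of the complement `T^c = [p] \ T`,
as an order isomorphism `Fin (dim T) ≃o T^c` (positions are 0-indexed). -/
noncomputable def en (p : ℕ) (T : Finset ℕ) :
    Fin (cdim p T) ≃o {x // x ∈ Finset.range (p + 1) \ T} :=
  (Finset.range (p + 1) \ T).orderIsoOfFin rfl

/-- The joint set `δ_i^{-1}(T)` of the face necklace obtained by deleting the
vertex `i ∉ T`. -/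
def faceSet (T : Finset ℕ) (i : ℕ) : Finset ℕ :=
  T.filter (· < i) ∪ (T.filter (fun x => i < x)).image (· - 1)

/-- A family of coefficients `λ^T_τ ∈ ℤ`, indexed by necklaces `T` and
permutations `τ` of the complement `T^c` (identified with `Fin (dim T)` via the
order-preserving enumeration). -/
def LamFam : Type := ∀ (p : ℕ) (T : Finset ℕ), IsNeck p T → Equiv.Perm (Fin (cdim p T)) → ℤ

/-- (i) `λ^T_τ = λ^{T'}_{στσ⁻¹}` for every spine collapsing (active surjective)
map `σ : T → T'`; the order-preserving bijection `T^c ≅ (T')^c` induced by `σ`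
corresponds under the enumerations to the identity of `Fin (dim T)`. -/
def CondSpineCollapse (μ : LamFam) : Prop :=
  ∀ (p q : ℕ) (T U : Finset ℕ) (hT : IsNeck p T) (hU : IsNeck q U) (σ : ℕ → ℕ),
    MonotoneOn σ (Set.Iic p) → σ 0 = 0 → σ p = q →
    (∀ y ≤ q, ∃ x ≤ p, σ x = y) → U = T.image σ →
    (∀ i, i < p → σ i = σ (i + 1) → i ∈ T ∧ (i + 1) ∈ T) →
    ∀ (h : cdim p T = cdim q U) (τ : Equiv.Perm (Fin (cdim p T))),
      μ p T hT τ = μ q U hU ((finCongr h).permCongr τ)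

/-- (ii) `λ^{T₁∨T₂}_{τ₁*τ₂} = λ^{T₁}_{τ₁} · λ^{T₂}_{τ₂}`, the juxtaposition
`τ₁*τ₂` being the image of `(τ₁,τ₂)` under
`S(T₁^c) × S(T₂^c) ↪ S((T₁∨T₂)^c)`. -/
def CondWedge (μ : LamFam) : Prop :=
  ∀ (p q : ℕ) (T₁ T₂ : Finset ℕ) (h₁ : IsNeck p T₁) (h₂ : IsNeck q T₂)
    (hw : IsNeck (p + q) (wedgeT T₁ p T₂))
    (h : cdim p T₁ + cdim q T₂ = cdim (p + q) (wedgeT T₁ p T₂))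
    (τ₁ : Equiv.Perm (Fin (cdim p T₁))) (τ₂ : Equiv.Perm (Fin (cdim q T₂))),
    μ (p + q) (wedgeT T₁ p T₂) hw
        ((finCongr h).permCongr (finSumFinEquiv.permCongr (Equiv.sumCongr τ₁ τ₂))) =
      μ p T₁ h₁ τ₁ * μ q T₂ h₂ τ₂

/-- (ii') `λ^{Δ⁰}_{id} = 1`. -/
def CondUnit (μ : LamFam) : Prop :=
  ∀ (h : IsNeck 0 {0}) (τ : Equiv.Perm (Fin (cdim 0 {0}))), μ 0 {0} h τ = 1

/-- (iii) `λ^T_{τ∘(i_l, i_{l+1})} = -λ^T_τ` for adjacent transpositions of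
`T^c` (consecutive positions `a`, `a+1`). -/
def CondSwap (μ : LamFam) : Prop :=
  ∀ (p : ℕ) (T : Finset ℕ) (hT : IsNeck p T) (τ : Equiv.Perm (Fin (cdim p T)))
    (a b : Fin (cdim p T)), (b : ℕ) = (a : ℕ) + 1 →
    μ p T hT (τ * Equiv.swap a b) = - μ p T hT τ

/-- (iv) `λ^T_{(ρ|j)} = (-1)^{n+j-1} λ^{δ_{i_j}^{-1}(T)}_ρ`, where `n = dim T`,
`i_j` is the `j`-th element of `T^c` (0-indexed position `j0`), and `(ρ|j)` is
the permutation placing `i_j` in last position: under the enumerations,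
`(ρ|j)(last) = j0` and `(ρ|j)(castSucc k) = succAbove j0 (ρ k)`. -/
def CondFace (μ : LamFam) : Prop :=
  ∀ (p : ℕ) (T : Finset ℕ) (hT : IsNeck p T) (m : ℕ) (hm : cdim p T = m + 1)
    (j0 : Fin (cdim p T))
    (hT' : IsNeck (p - 1) (faceSet T ((en p T j0 : ℕ))))
    (hm' : cdim (p - 1) (faceSet T ((en p T j0 : ℕ))) = m)
    (ρ : Equiv.Perm (Fin (cdim (p - 1) (faceSet T ((en p T j0 : ℕ))))))
    (π : Equiv.Perm (Fin (cdim p T))),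
    ((finCongr hm).permCongr π) (Fin.last m) = finCongr hm j0 →
    (∀ kk : Fin m, ((finCongr hm).permCongr π) (Fin.castSucc kk) =
        (finCongr hm j0).succAbove (((finCongr hm').permCongr ρ) kk)) →
    μ p T hT π =
      (-1) ^ (m + (j0 : ℕ) + 1) * μ (p - 1) (faceSet T ((en p T j0 : ℕ))) hT' ρ

/-- (v) `λ^T_{(j|θ)} = (-1)^j λ^{T∪{i_j}}_θ`, where `(j|θ)` places `i_j` in
first position: under the enumerations, `(j|θ)(0) = j0` and
`(j|θ)(succ k) = succAbove j0 (θ k)`. -/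
def CondInsert (μ : LamFam) : Prop :=
  ∀ (p : ℕ) (T : Finset ℕ) (hT : IsNeck p T) (m : ℕ) (hm : cdim p T = m + 1)
    (j0 : Fin (cdim p T))
    (hT'' : IsNeck p (insert ((en p T j0 : ℕ)) T))
    (hm'' : cdim p (insert ((en p T j0 : ℕ)) T) = m)
    (θ : Equiv.Perm (Fin (cdim p (insert ((en p T j0 : ℕ)) T))))
    (π : Equiv.Perm (Fin (cdim p T))),
    ((finCongr hm).permCongr π) 0 = finCongr hm j0 →
    (∀ kk : Fin m, ((finCongr hm).permCongr π) (Fin.succ kk) =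
        (finCongr hm j0).succAbove (((finCongr hm'').permCongr θ) kk)) →
    μ p T hT π = (-1) ^ ((j0 : ℕ) + 1) * μ p (insert ((en p T j0 : ℕ)) T) hT'' θ

/-- The full system of equations (i)–(v). -/
def Sys (μ : LamFam) : Prop :=
  CondSpineCollapse μ ∧ CondWedge μ ∧ CondUnit μ ∧ CondSwap μ ∧ CondFace μ ∧
    CondInsert μ

/-- The family `λ^T_τ = (-1)^{dim T} · sgn(τ)`. -/
def lamStd : LamFam := fun p T _ τ => (-1) ^ (cdim p T) * ((Equiv.Perm.sign τ : ℤˣ) : ℤ)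


open Equiv Equiv.Perm

/-- Sign of a permutation placing `j` in first position. -/
lemma sign_insert_zero {m : ℕ} (π : Perm (Fin (m + 1))) (j : Fin (m + 1)) (e : Perm (Fin m))
    (h0 : π 0 = j) (hs : ∀ k : Fin m, π k.succ = j.succAbove (e k)) :
    Perm.sign π = (-1) ^ (j : ℕ) * Perm.sign e := by
  have hdecfst : (Equiv.Perm.decomposeFin (j.cycleRange * π)).1 = 0 := by
    have h := Equiv.Perm.decomposeFin_symm_apply_zero
      (Equiv.Perm.decomposeFin (j.cycleRange * π)).1 (Equiv.Perm.decomposeFin (j.cycleRange * π)).2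
    rw [Prod.mk.eta, Equiv.symm_apply_apply] at h
    rw [← h]
    simp [Perm.mul_apply, h0, Fin.cycleRange_self]
  have hdec : Equiv.Perm.decomposeFin.symm (0, (Equiv.Perm.decomposeFin (j.cycleRange * π)).2)
      = j.cycleRange * π := by
    conv_rhs => rw [← Equiv.symm_apply_apply Equiv.Perm.decomposeFin (j.cycleRange * π)]
    congr 1
    exact Prod.ext hdecfst.symm rfl
  set e' := (Equiv.Perm.decomposeFin (j.cycleRange * π)).2 with he'
  have hee : e' = e := by
    ext k
    have h1 : (j.cycleRange * π) k.succ = (e' k).succ := by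
      rw [← hdec, Equiv.Perm.decomposeFin_symm_apply_succ]
      simp
    have h2 : (j.cycleRange * π) k.succ = (e k).succ := by
      rw [Perm.mul_apply, hs k, Fin.cycleRange_succAbove]
    have := h1.symm.trans h2
    exact congrArg Fin.val (Fin.succ_injective _ this)
  have hsign : Perm.sign (j.cycleRange * π) = Perm.sign e := by
    rw [← hdec, Equiv.Perm.decomposeFin.symm_sign, hee]
    simp
  have : Perm.sign j.cycleRange * Perm.sign π = Perm.sign e := by
    rw [← Perm.sign_mul, hsign]
  rw [Fin.sign_cycleRange] at this
  have h4 : ((-1 : ℤˣ) ^ (j : ℕ)) * ((-1 : ℤˣ) ^ (j : ℕ) * Perm.sign π) = (-1) ^ (j:ℕ) * Perm.sign e := by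
    rw [this]
  rw [← mul_assoc, ← pow_add, ← two_mul, pow_mul] at h4
  simpa using h4

/-- Sign of a permutation placing `j` in last position. -/
lemma sign_insert_last {m : ℕ} (π : Perm (Fin (m + 1))) (j : Fin (m + 1)) (e : Perm (Fin m))
    (h0 : π (Fin.last m) = j) (hs : ∀ k : Fin m, π k.castSucc = j.succAbove (e k)) :
    Perm.sign π = (-1) ^ (m + (j : ℕ)) * Perm.sign e := by
  set πr : Perm (Fin (m + 1)) := (Fin.revPerm : Perm (Fin (m+1))).permCongr π with hπr
  set er : Perm (Fin m) := (Fin.revPerm : Perm (Fin m)).permCongr e with her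
  have happ : ∀ x, πr x = Fin.rev (π (Fin.rev x)) := by
    intro x
    show Fin.revPerm (π (Fin.revPerm.symm x)) = _
    rw [Fin.revPerm_symm]
    rfl
  have happ' : ∀ x, er x = Fin.rev (e (Fin.rev x)) := by
    intro x
    show Fin.revPerm (e (Fin.revPerm.symm x)) = _
    rw [Fin.revPerm_symm]
    rfl
  have hz : πr 0 = j.rev := by
    rw [happ]
    have : Fin.rev (0 : Fin (m+1)) = Fin.last m := by
      rw [← Fin.rev_last, Fin.rev_rev]
    rw [this, h0]
  have hsucc : ∀ k : Fin m, πr k.succ = j.rev.succAbove (er k) := by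
    intro k
    rw [happ, Fin.rev_succ, hs, Fin.rev_succAbove, ← happ']
  have := sign_insert_zero πr j.rev er hz hsucc
  rw [Equiv.Perm.sign_permCongr] at this
  rw [show Perm.sign er = Perm.sign e from Equiv.Perm.sign_permCongr _ _] at this
  rw [this]
  congr 1
  have hj : (j : ℕ) ≤ m := Fin.is_le j
  have hval : ((j.rev : Fin (m+1)) : ℕ) = m - (j : ℕ) := by
    rw [Fin.val_rev]; omega
  rw [hval, show m + (j : ℕ) = (m - (j : ℕ)) + 2 * (j:ℕ) by omega, pow_add, pow_mul]
  simp

theorem sys_lamStd : Sys lamStd := by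
  refine ⟨?_, ?_, ?_, ?_, ?_, ?_⟩
  · -- spine collapse
    intro p q T U hT hU σ _ _ _ _ _ _ h τ
    simp only [lamStd, Equiv.Perm.sign_permCongr, h]
  · -- wedge
    intro p q T₁ T₂ h₁ h₂ hw h τ₁ τ₂
    simp only [lamStd, Equiv.Perm.sign_permCongr, Equiv.Perm.sign_sumCongr, ← h, pow_add,
      Units.val_mul, Units.val_pow_eq_pow_val, Units.val_neg, Units.val_one]
    ring
  · -- unit
    intro h τ
    have h0 : cdim 0 {0} = 0 := by decide
    haveI : Subsingleton (Fin (cdim 0 {0})) := by rw [h0]; infer_instance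
    have hτ : τ = 1 := by
      ext x
      exact absurd (Subsingleton.elim x x) (by rw [h0] at x; exact absurd x.2 (by omega))
    rw [hτ]
    simp [lamStd, h0]
  · -- swap
    intro p T hT τ a b hb
    have hab : a ≠ b := by
      intro hh
      rw [hh] at hb
      omega
    simp only [lamStd, Equiv.Perm.sign_mul, Equiv.Perm.sign_swap hab,
      Units.val_mul, Units.val_pow_eq_pow_val, Units.val_neg, Units.val_one]
    ring
  · -- face
    intro p T hT m hm j0 hT' hm' ρ π hlast hcast
    have hsg := sign_insert_last ((finCongr hm).permCongr π) (finCongr hm j0)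
      ((finCongr hm').permCongr ρ) hlast hcast
    rw [Equiv.Perm.sign_permCongr] at hsg
    rw [show Equiv.Perm.sign ((finCongr hm').permCongr ρ) = Equiv.Perm.sign ρ from
      Equiv.Perm.sign_permCongr _ _] at hsg
    have hj : ((finCongr hm j0 : Fin (m+1)) : ℕ) = (j0 : ℕ) := rfl
    rw [hj] at hsg
    simp only [lamStd, hm, hm', hsg, Units.val_mul, Units.val_pow_eq_pow_val,
      Units.val_neg, Units.val_one, pow_add]
    ring
  · -- insert
    intro p T hT m hm j0 hT'' hm'' θ π h0 hsucc
    have hsg := sign_insert_zero ((finCongr hm).permCongr π) (finCongr hm j0)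
      ((finCongr hm'').permCongr θ) h0 hsucc
    rw [Equiv.Perm.sign_permCongr] at hsg
    rw [show Equiv.Perm.sign ((finCongr hm'').permCongr θ) = Equiv.Perm.sign θ from
      Equiv.Perm.sign_permCongr _ _] at hsg
    have hj : ((finCongr hm j0 : Fin (m+1)) : ℕ) = (j0 : ℕ) := rfl
    rw [hj] at hsg
    simp only [lamStd, hm, hm'', hsg, Units.val_mul, Units.val_pow_eq_pow_val,
      Units.val_neg, Units.val_one, pow_add]
    ring

theorem uniq_aux (μ : LamFam) (hμ : Sys μ) :
    ∀ (n p : ℕ) (T : Finset ℕ) (hT : IsNeck p T) (τ : Equiv.Perm (Fin (cdim p T))),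
      cdim p T = n → μ p T hT τ = lamStd p T hT τ := by
  have hstd : Sys lamStd := sys_lamStd
  intro n
  induction n with
  | zero =>
    intro p T hT τ h0
    have hempty : Finset.range (p + 1) \ T = ∅ := Finset.card_eq_zero.mp h0
    have hTne : T.Nonempty := ⟨0, hT.2.1⟩
    have hU : IsNeck 0 {0} := by
      refine ⟨?_, by simp, by simp⟩
      intro x hx
      simpa using hx
    have himg : ({0} : Finset ℕ) = T.image (fun _ => 0) := (Finset.image_const hTne 0).symm
    have hcd : cdim p T = cdim 0 {0} := by
      rw [h0]; decide
    have hmem : ∀ i, i < p → i ∈ T ∧ i + 1 ∈ T := by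
      intro i hi
      constructor <;>
      · by_contra hc
        have : _ ∈ Finset.range (p+1) \ T := Finset.mem_sdiff.mpr ⟨Finset.mem_range.mpr (by omega), hc⟩
        rw [hempty] at this
        simpa using this
    have e1 := hμ.1 p 0 T {0} hT hU (fun _ => 0) (monotoneOn_const) rfl rfl
      (fun y hy => ⟨0, Nat.zero_le p, by show (0:ℕ) = y; omega⟩) himg (fun i hi _ => hmem i hi) hcd τ
    have e2 := hstd.1 p 0 T {0} hT hU (fun _ => 0) (monotoneOn_const) rfl rfl
      (fun y hy => ⟨0, Nat.zero_le p, by show (0:ℕ) = y; omega⟩) himg (fun i hi _ => hmem i hi) hcd τ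
    rw [e1, e2, hμ.2.2.1 hU _, hstd.2.2.1 hU _]
  | succ m IH =>
    intro p T hT τ hm
    set πt : Equiv.Perm (Fin (m + 1)) := (finCongr hm).permCongr τ with hπt
    set jt : Fin (m + 1) := πt 0 with hjt
    set j0 : Fin (cdim p T) := (finCongr hm).symm jt with hj0def
    have hj0 : finCongr hm j0 = jt := Equiv.apply_symm_apply _ _
    set i : ℕ := ((en p T j0 : {x // x ∈ Finset.range (p + 1) \ T}) : ℕ) with hidef
    have hi : i ∈ Finset.range (p + 1) \ T := (en p T j0).2
    have hi_range : i ∈ Finset.range (p + 1) := (Finset.mem_sdiff.mp hi).1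
    have hT'' : IsNeck p (insert i T) :=
      ⟨Finset.insert_subset hi_range hT.1, Finset.mem_insert_of_mem hT.2.1,
        Finset.mem_insert_of_mem hT.2.2⟩
    have hsd : Finset.range (p + 1) \ insert i T = (Finset.range (p + 1) \ T).erase i := by
      ext x
      simp only [Finset.mem_sdiff, Finset.mem_erase, Finset.mem_insert, Finset.mem_range]
      tauto
    have hm'' : cdim p (insert i T) = m := by
      show (Finset.range (p + 1) \ insert i T).card = m
      rw [hsd, Finset.card_erase_of_mem hi]
      have h5 : (Finset.range (p + 1) \ T).card = m + 1 := hm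
      omega
    -- decompose πt
    have hdecfst : (Equiv.Perm.decomposeFin (jt.cycleRange * πt)).1 = 0 := by
      have h := Equiv.Perm.decomposeFin_symm_apply_zero
        (Equiv.Perm.decomposeFin (jt.cycleRange * πt)).1
        (Equiv.Perm.decomposeFin (jt.cycleRange * πt)).2
      rw [Prod.mk.eta, Equiv.symm_apply_apply] at h
      rw [← h]
      simp [Equiv.Perm.mul_apply, ← hjt, Fin.cycleRange_self]
    set θt : Equiv.Perm (Fin m) := (Equiv.Perm.decomposeFin (jt.cycleRange * πt)).2 with hθt
    have hdec : Equiv.Perm.decomposeFin.symm (0, θt) = jt.cycleRange * πt := by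
      conv_rhs => rw [← Equiv.symm_apply_apply Equiv.Perm.decomposeFin (jt.cycleRange * πt)]
      congr 1
      exact Prod.ext hdecfst.symm rfl
    have hsucc : ∀ k : Fin m, πt k.succ = jt.succAbove (θt k) := by
      intro k
      have h2 : (jt.cycleRange * πt) k.succ = (θt k).succ := by
        rw [← hdec, Equiv.Perm.decomposeFin_symm_apply_succ]
        simp
      have h3 : Fin.cycleRange jt (jt.succAbove (θt k)) = (θt k).succ :=
        Fin.cycleRange_succAbove _ _
      have h4 : Fin.cycleRange jt (πt k.succ) = (θt k).succ := h2
      exact (Equiv.injective _) (h4.trans h3.symm)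
    set θ : Equiv.Perm (Fin (cdim p (insert i T))) := (finCongr hm'').symm.permCongr θt with hθ
    have hθeq : (finCongr hm'').permCongr θ = θt := by
      ext x
      simp [hθ, Equiv.permCongr_apply]
    have cond1 : ((finCongr hm).permCongr τ) 0 = finCongr hm j0 := by
      rw [hj0]
    have cond2 : ∀ kk : Fin m, ((finCongr hm).permCongr τ) (Fin.succ kk) =
        (finCongr hm j0).succAbove (((finCongr hm'').permCongr θ) kk) := by
      intro kk
      rw [hj0, hθeq]
      exact hsucc kk
    have e1 := hμ.2.2.2.2.2 p T hT m hm j0 hT'' hm'' θ τ cond1 cond2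
    have e2 := hstd.2.2.2.2.2 p T hT m hm j0 hT'' hm'' θ τ cond1 cond2
    rw [e1, e2, IH p (insert i T) hT'' θ hm'']

/-- The coefficients `λ^T_τ = (-1)^{dim T} sgn(τ)` give the unique solution of
the system (i)–(v). -/
theorem lambda_unique_solution :
    Sys lamStd ∧
      ∀ μ : LamFam, Sys μ →
        ∀ (p : ℕ) (T : Finset ℕ) (hT : IsNeck p T) (τ : Equiv.Perm (Fin (cdim p T))),
          μ p T hT τ = lamStd p T hT τ := by
  exact ⟨sys_lamStd, fun μ hμ p T hT τ => uniq_aux μ hμ (cdim p T) p T hT τ rfl⟩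
end
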